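/- Let λ > 0 and let σ, σ' be independent random variables, each uniformly distributed on [-λ, λ]. Define φ_λ(s) = (|s| − λ)·1_{|s| > λ}. Then for all real a, b: |λ²·E[sign(a+σ)·sign(b+σ')] − ab| ≤ φ_λ(a)·|b| + |a|·φ_λ(b). -/

import Mathlib

open MeasureTheory

noncomputable def sgn (t : ℝ) : ℝ := if 0 ≤ t then 1 else -1

/-- The uniform probability measure on the interval `[-l, l]`. -/
noncomputable def unifIcc (l : ℝ) : Measure ℝ :=
  (ENNReal.ofReal (2 * l))⁻¹ • (volume.restrict (Set.Icc (-l) l))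

/-- `φ_λ(s) = (|s| - λ) 1_{|s| > λ}`. -/
noncomputable def phi' (l s : ℝ) : ℝ := if l < |s| then |s| - l else 0

instance (l : ℝ) : SFinite (unifIcc l) := by
  unfold unifIcc; infer_instance

lemma phi'_nonneg (l s : ℝ) : 0 ≤ phi' l s := by
  unfold phi'
  split
  · linarith [show l < |s| from by assumption]
  · exact le_rfl

lemma integral_sgn (l : ℝ) (hl : 0 < l) (a : ℝ) :
    ∫ x, sgn (a + x) ∂(unifIcc l) = max (-l) (min l a) / l := by
  have h2l : (0:ℝ) < 2 * l := by linarith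
  have hkey : ∀ x : ℝ, sgn (a + x) = Set.indicator (Set.Ici (-a)) (fun _ => (2:ℝ)) x - 1 := by
    intro x
    by_cases h : -a ≤ x
    · rw [Set.indicator_of_mem (by exact h)]
      simp only [sgn, if_pos (show (0:ℝ) ≤ a + x by linarith)]
      norm_num
    · rw [Set.indicator_of_notMem (by exact h)]
      push_neg at h
      simp only [sgn, if_neg (show ¬ ((0:ℝ) ≤ a + x) by push_neg; linarith)]
      norm_num
  rw [unifIcc, integral_smul_measure]
  simp only [hkey]
  have hint1 : IntegrableOn (Set.indicator (Set.Ici (-a)) (fun _ => (2:ℝ))) (Set.Icc (-l) l) volume := by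
    exact (integrableOn_const measure_Icc_lt_top.ne).indicator measurableSet_Ici
  have hint2 : IntegrableOn (fun _ : ℝ => (1:ℝ)) (Set.Icc (-l) l) volume :=
    integrableOn_const measure_Icc_lt_top.ne
  rw [integral_sub hint1 hint2]
  rw [setIntegral_indicator measurableSet_Ici]
  have hs : Set.Icc (-l) l ∩ Set.Ici (-a) = Set.Icc (max (-l) (-a)) l := by
    ext x
    simp only [Set.mem_inter_iff, Set.mem_Icc, Set.mem_Ici, max_le_iff]
    tauto
  rw [hs, setIntegral_const, setIntegral_const]
  rw [measureReal_def, measureReal_def, Real.volume_Icc, Real.volume_Icc]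
  rw [ENNReal.toReal_inv, ENNReal.toReal_ofReal h2l.le]
  rw [ENNReal.toReal_ofReal (by linarith : (0:ℝ) ≤ l - -l)]
  rcases le_or_gt a (-l) with h | h
  · rw [max_eq_right (by linarith : (-l:ℝ) ≤ -a),
      ENNReal.ofReal_eq_zero.mpr (by linarith), min_eq_right (by linarith : a ≤ l),
      max_eq_left (by linarith : a ≤ -l)]
    simp only [ENNReal.toReal_zero, smul_eq_mul]
    field_simp
    ring
  · rcases le_or_gt a l with h' | h'
    · rw [max_eq_right (by linarith : (-l:ℝ) ≤ -a),
        ENNReal.toReal_ofReal (by linarith : (0:ℝ) ≤ l - -a),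
        min_eq_right h', max_eq_right (by linarith : (-l:ℝ) ≤ a)]
      simp only [smul_eq_mul]
      field_simp
      ring
    · rw [max_eq_left (by linarith : (-a:ℝ) ≤ -l),
        ENNReal.toReal_ofReal (by linarith : (0:ℝ) ≤ l - -l),
        min_eq_left h'.le, max_eq_right (by linarith : (-l:ℝ) ≤ l)]
      simp only [smul_eq_mul]
      field_simp
      ring

lemma clamp_abs (l : ℝ) (hl : 0 < l) (a : ℝ) :
    |max (-l) (min l a) - a| = phi' l a ∧ |max (-l) (min l a)| ≤ |a| := by
  unfold phi'
  rcases lt_or_ge a (-l) with h | h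
  · rw [min_eq_right (by linarith), max_eq_left (by linarith)]
    rw [if_pos (by rw [abs_of_nonpos (by linarith)]; linarith)]
    rw [abs_of_nonpos (by linarith : a ≤ 0), abs_of_nonneg (by linarith : (0:ℝ) ≤ -l - a),
      abs_of_nonpos (by linarith : (-l:ℝ) ≤ 0)]
    constructor <;> linarith
  · rcases le_or_gt a l with h' | h'
    · rw [min_eq_right h', max_eq_right (by linarith)]
      rw [if_neg (by rw [not_lt, abs_le]; constructor <;> linarith)]
      simp
    · rw [min_eq_left h'.le, max_eq_right (by linarith)]
      rw [if_pos (by rw [abs_of_pos (by linarith)]; linarith)]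
      rw [abs_of_pos (by linarith : (0:ℝ) < a), abs_of_nonpos (by linarith : l - a ≤ 0),
        abs_of_pos hl]
      constructor <;> linarith

theorem stmt2 (l : ℝ) (hl : 0 < l) (a b : ℝ) :
    |l ^ 2 * ∫ p : ℝ × ℝ, sgn (a + p.1) * sgn (b + p.2)
        ∂((unifIcc l).prod (unifIcc l)) - a * b| ≤
      phi' l a * |b| + |a| * phi' l b := by
  have hprod : (∫ p : ℝ × ℝ, sgn (a + p.1) * sgn (b + p.2)
      ∂((unifIcc l).prod (unifIcc l))) =
      (∫ x, sgn (a + x) ∂(unifIcc l)) * (∫ y, sgn (b + y) ∂(unifIcc l)) :=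
    integral_prod_mul (fun x => sgn (a + x)) (fun y => sgn (b + y))
  rw [hprod, integral_sgn l hl a, integral_sgn l hl b]
  set ca := max (-l) (min l a) with hca
  set cb := max (-l) (min l b) with hcb
  have hA := clamp_abs l hl a
  have hB := clamp_abs l hl b
  have hln : l ≠ 0 := hl.ne'
  have hval : l ^ 2 * (ca / l * (cb / l)) = ca * cb := by field_simp
  rw [hval]
  have key : ca * cb - a * b = (ca - a) * cb + a * (cb - b) := by ring
  rw [key]
  calc |(ca - a) * cb + a * (cb - b)| ≤ |(ca - a) * cb| + |a * (cb - b)| := abs_add_le _ _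
    _ = |ca - a| * |cb| + |a| * |cb - b| := by rw [abs_mul, abs_mul]
    _ ≤ phi' l a * |b| + |a| * phi' l b := by
        rw [hA.1, hB.1]
        have h1 : phi' l a * |cb| ≤ phi' l a * |b| :=
          mul_le_mul_of_nonneg_left hB.2 (phi'_nonneg l a)
        linarith
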